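/- Let X, K, Z be finite sets, P_{XZ} a probability distribution on X × Z, and Q_Z a fully supported probability distribution on Z. Let G be a random function from X to K (a random variable taking values in the set of functions X → K) satisfying the universal₂ collision bound P[G(x₁) = G(x₂)] ≤ 1/|K| for all x₁ ≠ x₂ in X. Then for every γ > 0, E_G[ S(G(X)|Z) ] ≤ E_γ(P_{XZ}, Q_X^unif × Q_Z) + (1/2)·√( (γ·|K|/|X|)·E_{(X,Z)~P_{XZ}}[ exp(−|ı(X;Z) − log γ|) ] ). -/

import Mathlib

open Finset

noncomputable section

/-- Total variation distance between two finitely supported distributions. -/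
def tv {A : Type*} [Fintype A] (P Q : A → ℝ) : ℝ := (1 / 2) * ∑ a, |P a - Q a|

/-- The `E_γ` metric `E_γ(P,Q) = ∑_a max (P a − γ·Q a) 0`. -/
def Egamma {A : Type*} [Fintype A] (γ : ℝ) (P Q : A → ℝ) : ℝ :=
  ∑ a, max (P a - γ * Q a) 0

set_option maxHeartbeats 1000000 in
/-- random universal₂ hashing: let `G` be a random function from `X`
to `K`, given by a probability distribution `μ` on the (finite) function space
`X → K`, satisfying the collision bound `P[G(x₁) = G(x₂)] ≤ 1/|K|` for all `x₁ ≠ x₂`.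
Then for every `γ > 0`,
`E_G[S(G(X)|Z)] ≤ E_γ(P_{XZ}, Q_X^unif × Q_Z)
  + (1/2)·√((γ·|K|/|X|)·E_{P_{XZ}}[exp(−|ı(X;Z) − log γ|)])`. -/
theorem random_hash_privacy_amplification
    {X K Z : Type*} [Fintype X] [Fintype K] [Fintype Z]
    [Nonempty X] [Nonempty K] [DecidableEq X] [DecidableEq K]
    (PXZ : X × Z → ℝ)
    (hpos : ∀ q, 0 ≤ PXZ q) (hsum : ∑ q, PXZ q = 1)
    (μ : (X → K) → ℝ)
    (hμpos : ∀ g, 0 ≤ μ g) (hμsum : ∑ g, μ g = 1)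
    (hcoll : ∀ x₁ x₂ : X, x₁ ≠ x₂ →
      ∑ g ∈ univ.filter (fun g : X → K => g x₁ = g x₂), μ g ≤ (Fintype.card K : ℝ)⁻¹)
    (γ : ℝ) (hγ : 0 < γ)
    (QZ : Z → ℝ) (hQpos : ∀ z, 0 < QZ z) (hQsum : ∑ z, QZ z = 1) :
    ∑ g : X → K, μ g *
        tv (fun q : K × Z => ∑ x ∈ univ.filter (fun x => g x = q.1), PXZ (x, q.2))
           (fun q : K × Z => (Fintype.card K : ℝ)⁻¹ * ∑ x, PXZ (x, q.2))
      ≤ Egamma γ PXZ (fun q : X × Z => (Fintype.card X : ℝ)⁻¹ * QZ q.2)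
        + (1 / 2) * Real.sqrt ((γ * (Fintype.card K : ℝ) / (Fintype.card X : ℝ)) *
            ∑ q : X × Z, PXZ q *
              Real.exp (-|Real.log (PXZ q / ((Fintype.card X : ℝ)⁻¹ * QZ q.2))
                - Real.log γ|)) := by
  classical
  have hnpos : (0:ℝ) < (Fintype.card X : ℝ) := by exact_mod_cast Fintype.card_pos
  have hcpos : (0:ℝ) < (Fintype.card K : ℝ) := by exact_mod_cast Fintype.card_pos
  set n : ℝ := (Fintype.card X : ℝ) with hn
  set c : ℝ := (Fintype.card K : ℝ) with hc
  have hQpos' : ∀ q : X × Z, 0 < n⁻¹ * QZ q.2 :=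
    fun q => mul_pos (inv_pos.2 hnpos) (hQpos q.2)
  set ν₁ : X × Z → ℝ := fun q => min (PXZ q) (γ * (n⁻¹ * QZ q.2)) with hν₁def
  set ν₂ : X × Z → ℝ := fun q => max (PXZ q - γ * (n⁻¹ * QZ q.2)) 0 with hν₂def
  have hν₁nn : ∀ q, 0 ≤ ν₁ q :=
    fun q => le_min (hpos q) (le_of_lt (mul_pos hγ (hQpos' q)))
  have hν₂nn : ∀ q, 0 ≤ ν₂ q := fun q => le_max_right _ _
  have hsplit : ∀ q, PXZ q = ν₁ q + ν₂ q := by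
    intro q
    simp only [hν₁def, hν₂def]
    rcases le_total (PXZ q) (γ * (n⁻¹ * QZ q.2)) with h | h
    · rw [min_eq_left h, max_eq_right (by linarith)]; ring
    · rw [min_eq_right h, max_eq_left (by linarith)]; ring
  set E : ℝ := ∑ q : X × Z, ν₂ q with hEdef
  set D : (X → K) → K × Z → ℝ := fun g q =>
    (∑ x ∈ univ.filter (fun x => g x = q.1), ν₁ (x, q.2)) - c⁻¹ * ∑ x, ν₁ (x, q.2)
    with hDdef
  set W : (X → K) → ℝ := fun g => ∑ q : K × Z, (D g q)^2 * (c / QZ q.2) with hWdef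
  set M : ℝ := ∑ q : X × Z, c * (ν₁ q)^2 / QZ q.2 with hMdef
  -- Step 1: pointwise (in g) triangle-type bound
  have step1 : ∀ g : X → K,
      tv (fun q : K × Z => ∑ x ∈ univ.filter (fun x => g x = q.1), PXZ (x, q.2))
         (fun q : K × Z => c⁻¹ * ∑ x, PXZ (x, q.2))
      ≤ E + (1/2) * ∑ q : K × Z, |D g q| := by
    intro g
    have hpt : ∀ q : K × Z,
        |(∑ x ∈ univ.filter (fun x => g x = q.1), PXZ (x, q.2)) - c⁻¹ * ∑ x, PXZ (x, q.2)|
        ≤ |D g q| + ((∑ x ∈ univ.filter (fun x => g x = q.1), ν₂ (x, q.2))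
            + c⁻¹ * ∑ x, ν₂ (x, q.2)) := by
      intro q
      have h1 : (∑ x ∈ univ.filter (fun x => g x = q.1), PXZ (x, q.2))
          = (∑ x ∈ univ.filter (fun x => g x = q.1), ν₁ (x, q.2))
            + ∑ x ∈ univ.filter (fun x => g x = q.1), ν₂ (x, q.2) := by
        rw [← Finset.sum_add_distrib]
        exact Finset.sum_congr rfl fun x _ => hsplit (x, q.2)
      have h2 : (∑ x, PXZ (x, q.2)) = (∑ x, ν₁ (x, q.2)) + ∑ x, ν₂ (x, q.2) := by
        rw [← Finset.sum_add_distrib]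
        exact Finset.sum_congr rfl fun x _ => hsplit (x, q.2)
      have hA2 : 0 ≤ ∑ x ∈ univ.filter (fun x => g x = q.1), ν₂ (x, q.2) :=
        Finset.sum_nonneg fun x _ => hν₂nn _
      have hB2 : 0 ≤ c⁻¹ * ∑ x, ν₂ (x, q.2) :=
        mul_nonneg (inv_nonneg.2 hcpos.le) (Finset.sum_nonneg fun x _ => hν₂nn _)
      have hre : (∑ x ∈ univ.filter (fun x => g x = q.1), PXZ (x, q.2))
            - c⁻¹ * ∑ x, PXZ (x, q.2)
          = D g q + ((∑ x ∈ univ.filter (fun x => g x = q.1), ν₂ (x, q.2))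
            - c⁻¹ * ∑ x, ν₂ (x, q.2)) := by
        simp only [hDdef]
        rw [h1, h2]; ring
      rw [hre]
      refine (abs_add_le _ _).trans ?_
      have h3 := abs_sub (∑ x ∈ univ.filter (fun x => g x = q.1), ν₂ (x, q.2))
        (c⁻¹ * ∑ x, ν₂ (x, q.2))
      rw [abs_of_nonneg hA2, abs_of_nonneg hB2] at h3
      linarith
    have hsumA2 : (∑ q : K × Z, ∑ x ∈ univ.filter (fun x => g x = q.1), ν₂ (x, q.2)) = E := by
      calc (∑ q : K × Z, ∑ x ∈ univ.filter (fun x => g x = q.1), ν₂ (x, q.2))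
          = ∑ k : K, ∑ z : Z, ∑ x ∈ univ.filter (fun x => g x = k), ν₂ (x, z) :=
            Fintype.sum_prod_type _
        _ = ∑ z : Z, ∑ k : K, ∑ x ∈ univ.filter (fun x => g x = k), ν₂ (x, z) :=
            Finset.sum_comm
        _ = ∑ z : Z, ∑ x : X, ν₂ (x, z) :=
            Finset.sum_congr rfl fun z _ => Finset.sum_fiberwise univ g _
        _ = ∑ q : X × Z, ν₂ q := (Fintype.sum_prod_type_right _).symm
        _ = E := hEdef.symm
    have hsumB2 : (∑ q : K × Z, c⁻¹ * ∑ x, ν₂ (x, q.2)) = E := by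
      calc (∑ q : K × Z, c⁻¹ * ∑ x, ν₂ (x, q.2))
          = ∑ _k : K, ∑ z : Z, c⁻¹ * ∑ x, ν₂ (x, z) := Fintype.sum_prod_type _
        _ = ∑ z : Z, ∑ x : X, ν₂ (x, z) := by
            rw [Finset.sum_const, Finset.card_univ, nsmul_eq_mul, ← Finset.mul_sum,
              ← hc, ← mul_assoc, mul_inv_cancel₀ hcpos.ne', one_mul]
        _ = ∑ q : X × Z, ν₂ q := (Fintype.sum_prod_type_right _).symm
        _ = E := hEdef.symm
    have hsb := Finset.sum_le_sum fun (q : K × Z) (_ : q ∈ univ) => hpt q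
    rw [Finset.sum_add_distrib, Finset.sum_add_distrib, hsumA2, hsumB2] at hsb
    simp only [tv]
    linarith
  -- auxiliary: total mass of the weight function
  have hgg1 : ∑ q : K × Z, QZ q.2 / c = 1 := by
    calc ∑ q : K × Z, QZ q.2 / c
        = ∑ _k : K, ∑ z : Z, QZ z / c := Fintype.sum_prod_type _
      _ = 1 := by
          rw [Finset.sum_const, Finset.card_univ, nsmul_eq_mul, ← Finset.sum_div,
            hQsum, ← hc]
          field_simp
  have hWnn : ∀ g, 0 ≤ W g := fun g =>
    Finset.sum_nonneg fun q _ => mul_nonneg (sq_nonneg _)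
      (div_nonneg hcpos.le (hQpos q.2).le)
  -- Step 2: Cauchy-Schwarz within a fixed g
  have step2 : ∀ g : X → K, (∑ q : K × Z, |D g q|) ≤ Real.sqrt (W g) := by
    intro g
    have hCS := Finset.sum_sq_le_sum_mul_sum_of_sq_eq_mul (Finset.univ : Finset (K × Z))
      (r := fun q : K × Z => |D g q|)
      (f := fun q : K × Z => (D g q)^2 * (c / QZ q.2))
      (g := fun q : K × Z => QZ q.2 / c)
      (fun q _ => mul_nonneg (sq_nonneg _) (div_nonneg hcpos.le (hQpos q.2).le))
      (fun q _ => div_nonneg (hQpos q.2).le hcpos.le)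
      (fun q _ => by
        have h1 : (c / QZ q.2) * (QZ q.2 / c) = 1 := by
          rw [div_mul_div_comm, mul_comm c (QZ q.2), div_self (mul_pos (hQpos q.2) hcpos).ne']
        rw [sq_abs, mul_assoc, h1, mul_one])
    rw [hgg1, mul_one] at hCS
    calc ∑ q : K × Z, |D g q|
        = Real.sqrt ((∑ q : K × Z, |D g q|)^2) :=
          (Real.sqrt_sq (Finset.sum_nonneg fun q _ => abs_nonneg _)).symm
      _ ≤ Real.sqrt (W g) := Real.sqrt_le_sqrt hCS
  -- Step 3: Jensen (concavity of sqrt) via Cauchy-Schwarz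
  have step3 : (∑ g, μ g * Real.sqrt (W g)) ≤ Real.sqrt (∑ g, μ g * W g) := by
    have hCS := Finset.sum_sq_le_sum_mul_sum_of_sq_eq_mul (Finset.univ : Finset (X → K))
      (r := fun g => μ g * Real.sqrt (W g))
      (f := μ)
      (g := fun g => μ g * W g)
      (fun g _ => hμpos g)
      (fun g _ => mul_nonneg (hμpos g) (hWnn g))
      (fun g _ => by rw [mul_pow, Real.sq_sqrt (hWnn g)]; ring)
    rw [hμsum, one_mul] at hCS
    calc ∑ g, μ g * Real.sqrt (W g)
        = Real.sqrt ((∑ g, μ g * Real.sqrt (W g))^2) :=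
          (Real.sqrt_sq (Finset.sum_nonneg fun g _ =>
            mul_nonneg (hμpos g) (Real.sqrt_nonneg _))).symm
      _ ≤ Real.sqrt (∑ g, μ g * W g) := Real.sqrt_le_sqrt hCS
  -- Step 4: collision bound
  have hkey : ∀ z : Z, (∑ g, μ g * ∑ k, (D g (k, z))^2) ≤ ∑ x, (ν₁ (x, z))^2 := by
    intro z
    have hD' : ∀ (g : X → K) (k : K), D g (k, z)
        = ∑ x, ν₁ (x, z) * ((if g x = k then (1:ℝ) else 0) - c⁻¹) := by
      intro g k
      simp only [hDdef]
      rw [Finset.sum_filter, Finset.mul_sum, ← Finset.sum_sub_distrib]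
      refine Finset.sum_congr rfl fun x _ => ?_
      by_cases h : g x = k <;> simp [h] <;> ring
    have he : ∀ (g : X → K) (x y : X),
        (∑ k, ((if g x = k then (1:ℝ) else 0) - c⁻¹)
          * ((if g y = k then (1:ℝ) else 0) - c⁻¹))
        = (if g x = g y then (1:ℝ) else 0) - c⁻¹ := by
      intro g x y
      have expand : ∀ k : K,
          ((if g x = k then (1:ℝ) else 0) - c⁻¹) * ((if g y = k then (1:ℝ) else 0) - c⁻¹)
          = (if g x = k then (1:ℝ) else 0) * (if g y = k then (1:ℝ) else 0)
            - c⁻¹ * (if g x = k then (1:ℝ) else 0)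
            - c⁻¹ * (if g y = k then (1:ℝ) else 0) + c⁻¹ * c⁻¹ := fun k => by ring
      rw [Finset.sum_congr rfl fun k _ => expand k, Finset.sum_add_distrib,
        Finset.sum_sub_distrib, Finset.sum_sub_distrib]
      have h1 : (∑ k, (if g x = k then (1:ℝ) else 0) * (if g y = k then (1:ℝ) else 0))
          = if g x = g y then (1:ℝ) else 0 := by
        rw [Finset.sum_eq_single (g x)]
        · by_cases h : g x = g y <;> simp [h, eq_comm]
        · intro k _ hk
          simp [Ne.symm hk]
        · intro h; exact absurd (Finset.mem_univ _) h
      have h2 : (∑ k, c⁻¹ * (if g x = k then (1:ℝ) else 0)) = c⁻¹ := by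
        rw [← Finset.mul_sum, Finset.sum_ite_eq univ (g x) (fun _ => (1:ℝ))]
        simp
      have h3 : (∑ k, c⁻¹ * (if g y = k then (1:ℝ) else 0)) = c⁻¹ := by
        rw [← Finset.mul_sum, Finset.sum_ite_eq univ (g y) (fun _ => (1:ℝ))]
        simp
      have h4 : (∑ _k : K, c⁻¹ * c⁻¹) = c⁻¹ := by
        rw [Finset.sum_const, Finset.card_univ, nsmul_eq_mul, ← mul_assoc,
          mul_inv_cancel₀ hcpos.ne', one_mul]
      rw [h1, h2, h3, h4]
      ring
    have hDsq : ∀ g : X → K, (∑ k, (D g (k, z))^2)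
        = ∑ x, ∑ y, ν₁ (x, z) * ν₁ (y, z) * ((if g x = g y then (1:ℝ) else 0) - c⁻¹) := by
      intro g
      have hper : ∀ k : K, (D g (k, z))^2
          = ∑ x, ∑ y, (ν₁ (x, z) * ((if g x = k then (1:ℝ) else 0) - c⁻¹))
            * (ν₁ (y, z) * ((if g y = k then (1:ℝ) else 0) - c⁻¹)) := by
        intro k
        rw [hD' g k, sq, Finset.sum_mul_sum]
      rw [Finset.sum_congr rfl fun k _ => hper k, Finset.sum_comm]
      refine Finset.sum_congr rfl fun x _ => ?_
      rw [Finset.sum_comm]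
      refine Finset.sum_congr rfl fun y _ => ?_
      rw [← he g x y, Finset.mul_sum]
      exact Finset.sum_congr rfl fun k _ => by ring
    have hxy : ∀ x y : X,
        (∑ g, μ g * (ν₁ (x, z) * ν₁ (y, z) * ((if g x = g y then (1:ℝ) else 0) - c⁻¹)))
        ≤ if x = y then (ν₁ (x, z))^2 else 0 := by
      intro x y
      have h5 : (∑ g, μ g * (if g x = g y then (1:ℝ) else 0))
          = ∑ g ∈ univ.filter (fun g : X → K => g x = g y), μ g := by
        rw [Finset.sum_filter]
        exact Finset.sum_congr rfl fun g _ => by by_cases h : g x = g y <;> simp [h]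
      have h6 : (∑ g : X → K, μ g * c⁻¹) = c⁻¹ := by
        rw [← Finset.sum_mul, hμsum, one_mul]
      have hrw : (∑ g, μ g * (ν₁ (x, z) * ν₁ (y, z) * ((if g x = g y then (1:ℝ) else 0) - c⁻¹)))
          = ν₁ (x, z) * ν₁ (y, z)
            * ((∑ g ∈ univ.filter (fun g : X → K => g x = g y), μ g) - c⁻¹) := by
        have hterm : ∀ g : X → K,
            μ g * (ν₁ (x, z) * ν₁ (y, z) * ((if g x = g y then (1:ℝ) else 0) - c⁻¹))
            = ν₁ (x, z) * ν₁ (y, z) * (μ g * (if g x = g y then (1:ℝ) else 0))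
              - ν₁ (x, z) * ν₁ (y, z) * (μ g * c⁻¹) := fun g => by ring
        rw [Finset.sum_congr rfl fun g _ => hterm g, Finset.sum_sub_distrib,
          ← Finset.mul_sum, ← Finset.mul_sum, h5, h6]
        ring
      rw [hrw]
      by_cases hxy' : x = y
      · subst hxy'
        rw [if_pos rfl]
        have hfil : (univ.filter (fun g : X → K => g x = g x)) = univ :=
          Finset.filter_true_of_mem fun g _ => rfl
        rw [hfil, hμsum]
        have h7 := hν₁nn (x, z)
        have hc0 : (0:ℝ) ≤ c⁻¹ := inv_nonneg.2 hcpos.le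
        nlinarith
      · simp only [if_neg hxy']
        exact mul_nonpos_of_nonneg_of_nonpos
          (mul_nonneg (hν₁nn _) (hν₁nn _))
          (sub_nonpos.2 (hcoll x y hxy'))
    have hswap1 : ∀ g : X → K, μ g * ∑ k, (D g (k, z))^2
        = ∑ x, ∑ y, μ g * (ν₁ (x, z) * ν₁ (y, z) * ((if g x = g y then (1:ℝ) else 0) - c⁻¹)) := by
      intro g
      rw [hDsq g, Finset.mul_sum]
      exact Finset.sum_congr rfl fun x _ => Finset.mul_sum _ _ _
    calc ∑ g, μ g * ∑ k, (D g (k, z))^2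
        = ∑ g : X → K, ∑ x, ∑ y, μ g
            * (ν₁ (x, z) * ν₁ (y, z) * ((if g x = g y then (1:ℝ) else 0) - c⁻¹)) :=
          Finset.sum_congr rfl fun g _ => hswap1 g
      _ = ∑ x, ∑ g : X → K, ∑ y, μ g
            * (ν₁ (x, z) * ν₁ (y, z) * ((if g x = g y then (1:ℝ) else 0) - c⁻¹)) :=
          Finset.sum_comm
      _ = ∑ x, ∑ y, ∑ g, μ g
            * (ν₁ (x, z) * ν₁ (y, z) * ((if g x = g y then (1:ℝ) else 0) - c⁻¹)) :=
          Finset.sum_congr rfl fun x _ => Finset.sum_comm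
      _ ≤ ∑ x, ∑ y, if x = y then (ν₁ (x, z))^2 else 0 :=
          Finset.sum_le_sum fun x _ => Finset.sum_le_sum fun y _ => hxy x y
      _ = ∑ x, (ν₁ (x, z))^2 := by
          refine Finset.sum_congr rfl fun x _ => ?_
          rw [Finset.sum_ite_eq univ x (fun y => (ν₁ (x, z))^2)]
          simp
  -- combine step 4 over z
  have hW_eq : ∀ g, W g = ∑ z, (c / QZ z) * ∑ k, (D g (k, z))^2 := by
    intro g
    simp only [hWdef]
    calc (∑ q : K × Z, (D g q)^2 * (c / QZ q.2))
        = ∑ k : K, ∑ z : Z, (D g (k, z))^2 * (c / QZ z) := Fintype.sum_prod_type _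
      _ = ∑ z : Z, ∑ k : K, (D g (k, z))^2 * (c / QZ z) := Finset.sum_comm
      _ = ∑ z, (c / QZ z) * ∑ k, (D g (k, z))^2 := by
          refine Finset.sum_congr rfl fun z _ => ?_
          rw [Finset.mul_sum]
          exact Finset.sum_congr rfl fun k _ => by ring
  have hμW : (∑ g, μ g * W g) ≤ M := by
    have hswap2 : ∀ g : X → K, μ g * W g
        = ∑ z, μ g * ((c / QZ z) * ∑ k, (D g (k, z))^2) := by
      intro g
      rw [hW_eq g, Finset.mul_sum]
    calc ∑ g, μ g * W g
        = ∑ g : X → K, ∑ z, μ g * ((c / QZ z) * ∑ k, (D g (k, z))^2) :=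
          Finset.sum_congr rfl fun g _ => hswap2 g
      _ = ∑ z, ∑ g : X → K, μ g * ((c / QZ z) * ∑ k, (D g (k, z))^2) :=
          Finset.sum_comm
      _ = ∑ z, (c / QZ z) * ∑ g, μ g * ∑ k, (D g (k, z))^2 := by
          refine Finset.sum_congr rfl fun z _ => ?_
          rw [Finset.mul_sum]
          exact Finset.sum_congr rfl fun g _ => by ring
      _ ≤ ∑ z, (c / QZ z) * ∑ x, (ν₁ (x, z))^2 :=
          Finset.sum_le_sum fun z _ => mul_le_mul_of_nonneg_left (hkey z)
            (div_nonneg hcpos.le (hQpos z).le)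
      _ = M := by
          rw [hMdef]
          calc ∑ z, (c / QZ z) * ∑ x, (ν₁ (x, z))^2
              = ∑ z : Z, ∑ x : X, c * (ν₁ (x, z))^2 / QZ z := by
                refine Finset.sum_congr rfl fun z _ => ?_
                rw [Finset.mul_sum]
                exact Finset.sum_congr rfl fun x _ => by ring
            _ = ∑ q : X × Z, c * (ν₁ q)^2 / QZ q.2 :=
                (Fintype.sum_prod_type_right (fun q : X × Z => c * (ν₁ q)^2 / QZ q.2)).symm
  -- Step 5: identify M with the exponential expression
  have hM : M = (γ * c / n) * ∑ q : X × Z, PXZ q *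
      Real.exp (-|Real.log (PXZ q / (n⁻¹ * QZ q.2)) - Real.log γ|) := by
    rw [hMdef, Finset.mul_sum]
    refine Finset.sum_congr rfl fun q _ => ?_
    have hu : 0 < n⁻¹ * QZ q.2 := hQpos' q
    rcases eq_or_lt_of_le (hpos q) with h0 | hp
    · have hz : ν₁ q = 0 := by
        simp only [hν₁def]
        rw [← h0, min_eq_left (mul_pos hγ hu).le]
      rw [hz, ← h0]
      simp
    · have hlog : Real.log (PXZ q / (n⁻¹ * QZ q.2)) - Real.log γ
          = Real.log (PXZ q / (γ * (n⁻¹ * QZ q.2))) := by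
        rw [Real.log_div hp.ne' hu.ne', Real.log_div hp.ne' (by positivity),
          Real.log_mul hγ.ne' hu.ne']
        ring
      have htpos : 0 < PXZ q / (γ * (n⁻¹ * QZ q.2)) := by positivity
      rcases le_total (PXZ q) (γ * (n⁻¹ * QZ q.2)) with hle | hge
      · have ht1 : PXZ q / (γ * (n⁻¹ * QZ q.2)) ≤ 1 :=
          (div_le_one (by positivity)).2 hle
        rw [hlog, abs_of_nonpos (Real.log_nonpos htpos.le ht1), neg_neg,
          Real.exp_log htpos]
        have hν : ν₁ q = PXZ q := by simp only [hν₁def]; exact min_eq_left hle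
        rw [hν]
        field_simp [hγ.ne', hnpos.ne', (hQpos q.2).ne']
      · have ht1 : 1 ≤ PXZ q / (γ * (n⁻¹ * QZ q.2)) :=
          (one_le_div (by positivity)).2 hge
        rw [hlog, abs_of_nonneg (Real.log_nonneg ht1), Real.exp_neg,
          Real.exp_log htpos]
        have hν : ν₁ q = γ * (n⁻¹ * QZ q.2) := by simp only [hν₁def]; exact min_eq_right hge
        rw [hν]
        field_simp [hγ.ne', hnpos.ne', (hQpos q.2).ne']
  have hEg : Egamma γ PXZ (fun q : X × Z => n⁻¹ * QZ q.2) = E := by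
    simp only [Egamma, hEdef, hν₂def]
  -- final assembly
  refine le_trans (Finset.sum_le_sum
    (fun g (_ : g ∈ univ) => mul_le_mul_of_nonneg_left (step1 g) (hμpos g))) ?_
  have hmid : (∑ g : X → K, μ g * (E + (1/2) * ∑ q : K × Z, |D g q|))
      = E + (1/2) * ∑ g, μ g * ∑ q : K × Z, |D g q| := by
    simp only [mul_add]
    rw [Finset.sum_add_distrib, ← Finset.sum_mul, hμsum, one_mul, Finset.mul_sum]
    congr 1
    exact Finset.sum_congr rfl fun g _ => by ring
  rw [hmid, hEg, ← hM]
  refine add_le_add_right (mul_le_mul_of_nonneg_left ?_ (by norm_num)) E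
  calc ∑ g, μ g * ∑ q : K × Z, |D g q|
      ≤ ∑ g, μ g * Real.sqrt (W g) :=
        Finset.sum_le_sum fun g _ => mul_le_mul_of_nonneg_left (step2 g) (hμpos g)
    _ ≤ Real.sqrt (∑ g, μ g * W g) := step3
    _ ≤ Real.sqrt M := Real.sqrt_le_sqrt hμW
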